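/- Let K be a Fraïssé structure with age 𝒦 and A ∈ 𝒦. The set of non-thick subsets of Emb(A, K) is closed under finite unions (i.e., forms an ideal) if and only if A is a Ramsey object in 𝒦. Consequently, there exists an ultrafilter on Emb(A, K) all of whose members are thick if and only if A is a Ramsey object. -/

import Mathlib

open FirstOrder CategoryTheory

universe u v

/-- A structure is locally finite if it is the union of an increasing chain of finite
substructures. -/
def IsLocallyFinite (L : FirstOrder.Language.{u, v}) (M : Type) [L.Structure M] : Prop :=
  ∃ A : ℕ → L.Substructure M, Monotone A ∧ (∀ n, ((A n : Set M)).Finite) ∧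
    (⋃ n, ((A n : Set M))) = Set.univ

/-- `M` is ultrahomogeneous: every isomorphism between finite substructures of `M`
extends to an automorphism of `M`. -/
def IsUltrahomog (L : FirstOrder.Language.{u, v}) (M : Type) [L.Structure M] : Prop :=
  ∀ S T : L.Substructure M, (S : Set M).Finite → (T : Set M).Finite →
    ∀ f : S ≃[L] T, ∃ g : M ≃[L] M, ∀ x : S, g x = f x

/-- `A` belongs to the age of `M`: `A` is finite and embeds into `M`. -/
def InAge (L : FirstOrder.Language.{u, v}) (M : Type) [L.Structure M]
    (A : Bundled.{0} L.Structure) : Prop :=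
  Finite A ∧ Nonempty (A ↪[L] M)

/-- `S ⊆ Emb(A, M)` is thick: for every finite `B` embeddable in `M` with
`Emb(A, B) ≠ ∅`, there is `g ∈ Emb(B, M)` with `g ∘ Emb(A, B) ⊆ S`. -/
def Thick (L : FirstOrder.Language.{u, v}) (M : Type) [L.Structure M]
    (A : Bundled.{0} L.Structure) (S : Set (A ↪[L] M)) : Prop :=
  ∀ B : Bundled.{0} L.Structure, Finite B → Nonempty (B ↪[L] M) →
    Nonempty (A ↪[L] B) → ∃ g : B ↪[L] M, ∀ h : A ↪[L] B, g.comp h ∈ S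

/-- `A` is a Ramsey object in the age of `M`: every full 2-coloring of `Emb(A, M)` has
a thick color class. -/
def IsRamseyObject (L : FirstOrder.Language.{u, v}) (M : Type) [L.Structure M]
    (A : Bundled.{0} L.Structure) : Prop :=
  ∀ γ : (A ↪[L] M) → Bool, ∃ i : Bool, Thick L M A {x | γ x = i}

section Helpers

open FirstOrder.Language

variable {L : FirstOrder.Language.{u, v}} {M : Type} [L.Structure M]

lemma thick_univ (A : Bundled.{0} L.Structure) : Thick L M A Set.univ :=
  fun _B _ hB _ => ⟨hB.some, fun _ => trivial⟩

lemma not_thick_empty (A : Bundled.{0} L.Structure) (hA : InAge L M A) :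
    ¬ Thick L M A (∅ : Set (A ↪[L] M)) := fun h => by
  obtain ⟨g, hg⟩ := h A hA.1 hA.2 ⟨Embedding.refl L A⟩
  exact hg (Embedding.refl L A)

lemma finite_subset_chain {An : ℕ → L.Substructure M} (hm : Monotone An)
    (hcov : (⋃ n, ((An n : Set M))) = Set.univ) {X : Set M} (hX : X.Finite) :
    ∃ n, X ⊆ (An n : Set M) := by
  refine Set.Finite.induction_on (motive := fun X _ => ∃ n, X ⊆ (An n : Set M)) X hX ⟨0, by simp⟩ ?_
  rintro a s ha hs ⟨n, hn⟩
  have : a ∈ ⋃ k, ((An k : Set M)) := by rw [hcov]; trivial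
  obtain ⟨k, hk⟩ := Set.mem_iUnion.1 this
  refine ⟨max n k, Set.insert_subset ?_ fun x hx => hm (le_max_left n k) (hn hx)⟩
  exact hm (le_max_right n k) hk

lemma finitary_ramsey {An : ℕ → L.Substructure M} (hm : Monotone An)
    (hcov : (⋃ n, ((An n : Set M))) = Set.univ)
    {A : Bundled.{0} L.Structure} (hAfin : Finite A)
    (hR : IsRamseyObject L M A)
    (B : Bundled.{0} L.Structure) (hBfin : Finite B) (hBM : Nonempty (B ↪[L] M))
    (hAB : Nonempty (A ↪[L] B)) :
    ∃ n, ∀ c : (A ↪[L] ↥(An n)) → Bool,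
      ∃ (b : B ↪[L] ↥(An n)) (i : Bool), ∀ h : A ↪[L] B, c (b.comp h) = i := by
  classical
  by_contra hcon
  push_neg at hcon
  choose cc hcc using hcon
  haveI := hAfin
  haveI := hBfin
  let U : Ultrafilter ℕ := Ultrafilter.of Filter.atTop
  have hU : ∀ n₀ : ℕ, {n | n₀ ≤ n} ∈ U :=
    fun n₀ => Ultrafilter.of_le Filter.atTop (Filter.mem_atTop n₀)
  have tail : ∀ (N : Bundled.{0} L.Structure), Finite N → ∀ f : N ↪[L] M,
      {n | ∀ a : N, f a ∈ An n} ∈ U := by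
    intro N hN f
    haveI := hN
    obtain ⟨n₀, hn₀⟩ := finite_subset_chain hm hcov (Set.finite_range f)
    refine Filter.mem_of_superset (hU n₀) ?_
    intro n hn a
    exact hm hn (hn₀ ⟨a, rfl⟩)
  let γ : (A ↪[L] M) → Bool := fun f =>
    decide ({n | ∃ hs : ∀ a : A, f a ∈ An n,
      cc n (Language.Embedding.codRestrict (An n) f hs) = true} ∈ U)
  obtain ⟨i, hthick⟩ := hR γ
  obtain ⟨g, hg⟩ := hthick B hBfin hBM hAB
  haveI : Finite (A ↪[L] B) :=
    Finite.of_injective (fun f => (f : A → B)) DFunLike.coe_injective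
  have key : ∀ h : A ↪[L] B, {n | ∃ hs : ∀ a : A, (g.comp h) a ∈ An n,
      cc n (Language.Embedding.codRestrict (An n) (g.comp h) hs) = i} ∈ U := by
    intro h
    have hγ : γ (g.comp h) = i := hg h
    cases i with
    | true => exact of_decide_eq_true hγ
    | false =>
      have h1 : {n | ∃ hs : ∀ a : A, (g.comp h) a ∈ An n,
          cc n (Language.Embedding.codRestrict (An n) (g.comp h) hs) = true} ∉ U :=
        of_decide_eq_false hγ
      have h2 := (Ultrafilter.compl_mem_iff_notMem (f := U)).2 h1
      have h3 := tail A hAfin (g.comp h)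
      filter_upwards [h2, h3] with n hn1 hn2
      refine ⟨hn2, ?_⟩
      rw [Bool.eq_false_iff]
      intro heq
      exact hn1 ⟨hn2, heq⟩
  have hgt := tail B hBfin g
  have hall : ({n | ∀ b : B, g b ∈ An n} ∩
      ⋂ h : A ↪[L] B, {n | ∃ hs : ∀ a : A, (g.comp h) a ∈ An n,
        cc n (Language.Embedding.codRestrict (An n) (g.comp h) hs) = i}) ∈ U :=
    Filter.inter_mem hgt (Filter.iInter_mem.2 key)
  obtain ⟨n, hgn, hforall⟩ := Ultrafilter.nonempty_of_mem hall
  obtain ⟨h0, hne⟩ := hcc n (Language.Embedding.codRestrict (An n) g hgn) i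
  obtain ⟨hs, hval⟩ := Set.mem_iInter.1 hforall h0
  apply hne
  have heq : (Language.Embedding.codRestrict (An n) g hgn).comp h0
      = Language.Embedding.codRestrict (An n) (g.comp h0) hs := by
    rw [Embedding.comp_codRestrict]
  rw [heq, hval]

lemma ramsey_union (hlf : IsLocallyFinite L M)
    {A : Bundled.{0} L.Structure} (hA : InAge L M A) (hR : IsRamseyObject L M A)
    (S T : Set (A ↪[L] M)) (hS : ¬ Thick L M A S) (hT : ¬ Thick L M A T) :
    ¬ Thick L M A (S ∪ T) := by
  classical
  obtain ⟨An, hm, hfin, hcov⟩ := hlf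
  unfold Thick at hS hT
  push_neg at hS hT
  obtain ⟨BS, hBSfin, hBSM, hABS, wS⟩ := hS
  obtain ⟨BT, hBTfin, hBTM, hABT, wT⟩ := hT
  intro hST
  obtain ⟨fS⟩ := hBSM
  obtain ⟨fT⟩ := hBTM
  haveI := hBSfin
  haveI := hBTfin
  obtain ⟨nS, hnS⟩ := finite_subset_chain hm hcov (Set.finite_range fS)
  obtain ⟨nT, hnT⟩ := finite_subset_chain hm hcov (Set.finite_range fT)
  set m := max nS nT with hmdef
  haveI hfinm : Finite ↥(An m) := (hfin m).to_subtype
  let B0 : Bundled.{0} L.Structure := ⟨↥(An m), inferInstance⟩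
  let eS : BS ↪[L] B0 :=
    Language.Embedding.codRestrict (An m) fS (fun b => hm (le_max_left nS nT) (hnS ⟨b, rfl⟩))
  let eT : BT ↪[L] B0 :=
    Language.Embedding.codRestrict (An m) fT (fun b => hm (le_max_right nS nT) (hnT ⟨b, rfl⟩))
  have hB0fin : Finite B0 := hfinm
  obtain ⟨n, hn⟩ := finitary_ramsey hm hcov hA.1 hR B0 hB0fin
    ⟨(An m).subtype⟩ ⟨eS.comp hABS.some⟩
  haveI hfinn : Finite ↥(An n) := (hfin n).to_subtype
  let C : Bundled.{0} L.Structure := ⟨↥(An n), inferInstance⟩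
  obtain ⟨b0, -, -⟩ := hn fun _ => true
  have hAC : Nonempty (A ↪[L] C) := ⟨b0.comp (eS.comp hABS.some)⟩
  obtain ⟨g, hg⟩ := hST C hfinn ⟨(An n).subtype⟩ hAC
  obtain ⟨b, i, hbi⟩ := hn fun h => decide (g.comp h ∈ S)
  have hassoc : ∀ (D : Bundled.{0} L.Structure) (e : D ↪[L] B0) (h : A ↪[L] D),
      ((g.comp b).comp e).comp h = g.comp (b.comp (e.comp h)) := by
    intro D e h
    ext x
    simp [Embedding.comp_apply]
  cases i with
  | true =>
    obtain ⟨h, hh⟩ := wS ((g.comp b).comp eS)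
    apply hh
    have hmem : g.comp (b.comp (eS.comp h)) ∈ S := of_decide_eq_true (hbi (eS.comp h))
    rw [hassoc BS eS h]
    exact hmem
  | false =>
    obtain ⟨h, hh⟩ := wT ((g.comp b).comp eT)
    apply hh
    have hnotS : g.comp (b.comp (eT.comp h)) ∉ S := by
      have := hbi (eT.comp h)
      simpa using of_decide_eq_false this
    have hmemST : g.comp (b.comp (eT.comp h)) ∈ S ∪ T := hg (b.comp (eT.comp h))
    rw [hassoc BT eT h]
    exact hmemST.resolve_left hnotS

end Helpers

/-- For `A` in the age of a Fraïssé structure `K`, the non-thick subsets of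
`Emb(A, K)` are closed under finite unions (form an ideal) iff `A` is a Ramsey object;
consequently there is an ultrafilter on `Emb(A, K)` all of whose members are thick iff
`A` is a Ramsey object. -/
theorem nonThick_ideal_iff_ramsey_and_thick_ultrafilter_iff_ramsey
    (L : FirstOrder.Language.{u, v}) (M : Type) [L.Structure M]
    (hcount : Countable M) (hinf : Infinite M)
    (hlf : IsLocallyFinite L M) (hultra : IsUltrahomog L M)
    (A : Bundled.{0} L.Structure) (hA : InAge L M A) :
    ((∀ S T : Set (A ↪[L] M), ¬ Thick L M A S → ¬ Thick L M A T →
        ¬ Thick L M A (S ∪ T)) ↔ IsRamseyObject L M A) ∧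
      ((∃ p : Ultrafilter (A ↪[L] M), ∀ S ∈ p, Thick L M A S) ↔
        IsRamseyObject L M A) := by
  classical
  have huniv : Thick L M A Set.univ := thick_univ A
  have ramsey_of_ideal : (∀ S T : Set (A ↪[L] M), ¬ Thick L M A S → ¬ Thick L M A T →
      ¬ Thick L M A (S ∪ T)) → IsRamseyObject L M A := by
    intro hI γ
    by_contra hno
    push_neg at hno
    apply hI _ _ (hno true) (hno false)
    have hcover : {x | γ x = true} ∪ {x | γ x = false} = Set.univ := by
      ext x
      simp only [Set.mem_union, Set.mem_setOf_eq, Set.mem_univ, iff_true]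
      cases h : γ x
      · exact Or.inr rfl
      · exact Or.inl rfl
    rw [hcover]
    exact huniv
  have ideal_of_ramsey : IsRamseyObject L M A → ∀ S T : Set (A ↪[L] M),
      ¬ Thick L M A S → ¬ Thick L M A T → ¬ Thick L M A (S ∪ T) :=
    fun hR S T hS hT => ramsey_union hlf hA hR S T hS hT
  refine ⟨⟨ramsey_of_ideal, ideal_of_ramsey⟩, ⟨?_, ?_⟩⟩
  · rintro ⟨p, hp⟩ γ
    rcases p.mem_or_compl_mem {x | γ x = true} with h | h
    · exact ⟨true, hp _ h⟩
    · refine ⟨false, ?_⟩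
      have hc : {x | γ x = true}ᶜ = {x | γ x = false} := by
        ext x
        simp only [Set.mem_compl_iff, Set.mem_setOf_eq, Bool.not_eq_true]
      rw [hc] at h
      exact hp _ h
  · intro hR
    have hI := ideal_of_ramsey hR
    set G : Set (Set (A ↪[L] M)) := {Y | ¬ Thick L M A Yᶜ} with hG
    have hfinU : ∀ t : Set (Set (A ↪[L] M)), t.Finite →
        (∀ Y ∈ t, ¬ Thick L M A Y) → ¬ Thick L M A (⋃₀ t) := by
      intro t ht
      refine Set.Finite.induction_on
        (motive := fun t _ => (∀ Y ∈ t, ¬ Thick L M A Y) → ¬ Thick L M A (⋃₀ t)) t ht ?_ ?_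
      · intro _
        rw [Set.sUnion_empty]
        exact not_thick_empty A hA
      · intro a s _ _ ih hmem
        rw [Set.sUnion_insert]
        exact hI _ _ (hmem a (Set.mem_insert _ _))
          (ih fun Y hY => hmem Y (Set.mem_insert_of_mem _ hY))
    haveI hNB : (Filter.generate G).NeBot := by
      rw [Filter.generate_neBot_iff]
      intro t hts htfin
      rw [Set.nonempty_iff_ne_empty]
      intro hemp
      have h1 : ¬ Thick L M A (⋃₀ (compl '' t)) := by
        refine hfinU _ (htfin.image _) ?_
        rintro Y ⟨X, hX, rfl⟩
        exact hts hX
      apply h1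
      have : ⋃₀ (compl '' t) = Set.univ := by
        rw [← Set.compl_sInter, hemp, Set.compl_empty]
      rw [this]
      exact huniv
    obtain ⟨p, hp⟩ := Ultrafilter.exists_le (Filter.generate G)
    refine ⟨p, fun S hS => ?_⟩
    by_contra hnt
    have hScompl : Sᶜ ∈ p := by
      refine hp (Filter.mem_generate_of_mem ?_)
      show ¬ Thick L M A Sᶜᶜ
      rw [compl_compl]
      exact hnt
    have hempty : (∅ : Set (A ↪[L] M)) ∈ p := by
      have := Filter.inter_mem hS hScompl
      simpa using this
    have hne : (∅ : Set (A ↪[L] M)).Nonempty := Ultrafilter.nonempty_of_mem hempty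
    simp at hne
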